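/- arXiv:2312.00089 — 2 statements merged into one kernel-verified Lean document; each statement's English description precedes it below -/
import Mathlib

section
/- Let n > x ≥ 2 and let {S_1, S_2, ..., S_x} be a constant sum partition of I_n with magic constant M, where |S_i| = n_i with 1 ≤ n_1 ≤ n_2 ≤ ... ≤ n_x < n, and set N_i = n_1 + n_2 + ... + n_i. Then for every i with 1 ≤ i ≤ x, one has i·M ≤ ∑_{j=1}^{N_i} (n − j + 1) = T_n − T_{n−N_i}. -/
/-- Auxiliary: the sum of a finset contained in `Icc 1 n` is at most the
sum of the `card` largest values. -/
lemma aux_sum_le (N : ℕ) : ∀ (n : ℕ) (T : Finset ℕ), T ⊆ Finset.Icc 1 n →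
    T.card = N → ∑ a ∈ T, a ≤ ∑ j ∈ Finset.range N, (n - j) := by
  induction N with
  | zero =>
    intro n T hT hc
    simp [Finset.card_eq_zero.mp hc]
  | succ N ih =>
    intro n T hT hc
    have hne : T.Nonempty := Finset.card_pos.mp (by omega)
    set m := T.max' hne with hm
    have hmT : m ∈ T := T.max'_mem hne
    have hmIcc := hT hmT
    simp only [Finset.mem_Icc] at hmIcc
    have hsub : T.erase m ⊆ Finset.Icc 1 (m - 1) := by
      intro a ha
      have haT := Finset.mem_of_mem_erase ha
      have hane := Finset.ne_of_mem_erase ha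
      have hale : a ≤ m := T.le_max' a haT
      have := hT haT
      simp only [Finset.mem_Icc] at this ⊢
      omega
    have hcard' : (T.erase m).card = N := by
      rw [Finset.card_erase_of_mem hmT, hc]
      omega
    have hIH := ih (m - 1) (T.erase m) hsub hcard'
    have hsplit : ∑ a ∈ T, a = m + ∑ a ∈ T.erase m, a :=
      (Finset.add_sum_erase T id hmT).symm
    rw [hsplit, Finset.sum_range_succ']
    have hterm : ∑ j ∈ Finset.range N, (m - 1 - j) ≤
        ∑ j ∈ Finset.range N, (n - (j + 1)) := by
      apply Finset.sum_le_sum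
      intro j _
      omega
    omega

/-- Auxiliary: closed form for the sum of the `N` largest values in `Icc 1 n`. -/
lemma aux_sum_eq (N : ℕ) : ∀ n : ℕ, N ≤ n →
    ∑ j ∈ Finset.range N, (n - j) = n * (n + 1) / 2 - (n - N) * (n - N + 1) / 2 := by
  induction N with
  | zero => intro n _; simp
  | succ N ih =>
    intro n hn
    rw [Finset.sum_range_succ, ih n (by omega)]
    set a := n - N with ha
    have ha1 : 1 ≤ a := by omega
    have htri : a * (a + 1) / 2 = (a - 1) * a / 2 + a := by
      obtain ⟨c, hc2⟩ : ∃ c, a = c + 1 := ⟨a - 1, by omega⟩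
      rw [hc2]
      have h1 : (c + 1) * (c + 1 + 1) = c * (c + 1) + 2 * (c + 1) := by ring
      have h2 : c + 1 - 1 = c := by omega
      rw [h1, h2, Nat.add_mul_div_left _ _ (by norm_num : 0 < 2)]
    have hmono : a * (a + 1) / 2 ≤ n * (n + 1) / 2 := by
      apply Nat.div_le_div_right
      exact Nat.mul_le_mul (by omega) (by omega)
    have hrw : n - (N + 1) = a - 1 := by omega
    have hrw2 : a - 1 + 1 = a := by omega
    rw [hrw, hrw2]
    omega

/-- If `n > x ≥ 2` and `{S_1, ..., S_x}` is a constant sum partition of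
`I_n = {1, ..., n}` with magic constant `M`, where `|S_i| = n_i`,
`1 ≤ n_1 ≤ n_2 ≤ ... ≤ n_x < n` and `N_i = n_1 + ... + n_i`, then for every `i`
(indexed here by `Fin x`, so `i : Fin x` corresponds to the `(i+1)`-st part),
`i·M ≤ ∑_{j=1}^{N_i} (n - j + 1) = T_n - T_{n - N_i}`. -/
theorem stmt_1 (n x M : ℕ) (hx : 2 ≤ x) (hn : x < n)
    (nn : Fin x → ℕ) (hpos : ∀ i, 1 ≤ nn i) (hmono : Monotone nn)
    (hlt : ∀ i, nn i < n)
    (S : Fin x → Finset ℕ)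
    (hcard : ∀ i, (S i).card = nn i)
    (hdisj : ∀ i j, i ≠ j → Disjoint (S i) (S j))
    (hcover : Finset.univ.biUnion S = Finset.Icc 1 n)
    (hsum : ∀ i, ∑ a ∈ S i, a = M) :
    ∀ i : Fin x,
      ((i : ℕ) + 1) * M ≤ ∑ j ∈ Finset.Icc 1 (∑ k ∈ Finset.Iic i, nn k), (n - j + 1) ∧
      ∑ j ∈ Finset.Icc 1 (∑ k ∈ Finset.Iic i, nn k), (n - j + 1)
        = n * (n + 1) / 2 -
          (n - ∑ k ∈ Finset.Iic i, nn k) * ((n - ∑ k ∈ Finset.Iic i, nn k) + 1) / 2 := by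
  intro i
  set N := ∑ k ∈ Finset.Iic i, nn k with hN
  set T := (Finset.Iic i).biUnion S with hT
  have hTsub : T ⊆ Finset.Icc 1 n := by
    rw [← hcover]
    exact Finset.biUnion_subset_biUnion_of_subset_left S (Finset.subset_univ _)
  have hTcard : T.card = N := by
    rw [hT, Finset.card_biUnion (fun a _ b _ hab => hdisj a b hab)]
    exact Finset.sum_congr rfl (fun k _ => hcard k)
  have hNn : N ≤ n := by
    have := Finset.card_le_card hTsub
    rwa [hTcard, Nat.card_Icc] at this
  have hTsum : ∑ a ∈ T, a = ((i : ℕ) + 1) * M := by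
    rw [hT, Finset.sum_biUnion]
    · rw [Finset.sum_congr rfl (fun k _ => hsum k), Finset.sum_const, Fin.card_Iic,
        smul_eq_mul]
    · intro a ha b hb hab
      exact hdisj a b hab
  have hconv : ∑ j ∈ Finset.Icc 1 N, (n - j + 1) = ∑ j ∈ Finset.range N, (n - j) := by
    rw [show Finset.Icc 1 N = Finset.Ico 1 (N + 1) by rw [Finset.Ico_add_one_right_eq_Icc],
      Finset.sum_Ico_eq_sum_range]
    apply Finset.sum_congr (by norm_num)
    intro j hj
    simp only [Finset.mem_range] at hj
    omega
  constructor
  · rw [← hTsum, hconv]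
    exact aux_sum_le N n T hTsub hTcard
  · rw [hconv]
    exact aux_sum_eq N n hNn
end

section
/- Let n > x ≥ p ≥ 2 and let {S_1, S_2, ..., S_x} be a partition of I_n with |S_i| = n_i, where 1 ≤ n_1 = n_2 = ... = n_p ≤ n_{p+1} ≤ ... ≤ n_x, and set Q_p = ∑_{j=1}^{p·n_1} (n − j + 1) and M = T_n/x. If M > ⌊Q_p/p⌋, then {S_1, S_2, ..., S_x} cannot be a constant sum partition of I_n. -/
/-- Sum of distinct positive naturals is at least triangular. -/
lemma aux_lower (s : Finset ℕ) (h1 : ∀ a ∈ s, 1 ≤ a) :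
    s.card * (s.card + 1) ≤ 2 * ∑ a ∈ s, a := by
  induction s using Finset.strongInduction with
  | _ s ih =>
    rcases s.eq_empty_or_nonempty with rfl | hne
    · simp
    · have hm : s.max' hne ∈ s := s.max'_mem hne
      set m := s.max' hne with hmdef
      have hsub : s ⊆ Finset.Icc 1 m := fun a ha =>
        Finset.mem_Icc.mpr ⟨h1 a ha, Finset.le_max' s a ha⟩
      have hcard : s.card ≤ m := by
        have := Finset.card_le_card hsub
        simpa using this
      have ihe := ih (s.erase m) (Finset.erase_ssubset hm)
        (fun a ha => h1 a (Finset.mem_of_mem_erase ha))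
      have hce : (s.erase m).card = s.card - 1 := Finset.card_erase_of_mem hm
      have hsum : m + ∑ a ∈ s.erase m, a = ∑ a ∈ s, a := Finset.add_sum_erase s id hm
      have hc1 : 1 ≤ s.card := Finset.card_pos.mpr hne
      obtain ⟨d, hd⟩ : ∃ d, s.card = d + 1 := ⟨s.card - 1, by omega⟩
      rw [hce, hd] at ihe
      simp only [Nat.add_sub_cancel] at ihe
      rw [hd]
      nlinarith [ihe, hcard, hsum]

/-- Gauss. -/
lemma aux_gauss (n : ℕ) : 2 * ∑ j ∈ Finset.Icc 1 n, j = n * (n + 1) := by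
  induction n with
  | zero => simp
  | succ n ih =>
    rw [Finset.sum_Icc_succ_top (by omega)]
    ring_nf
    ring_nf at ih
    omega

/-- Complement identity. -/
lemma aux_ident (n k : ℕ) (hk : k ≤ n) :
    2 * ∑ j ∈ Finset.Icc 1 k, (n - j + 1) + (n - k) * (n - k + 1) = n * (n + 1) := by
  induction k with
  | zero => simp
  | succ k ih =>
    have hk' : k ≤ n := by omega
    obtain ⟨m, hm⟩ : ∃ m, n = k + 1 + m := ⟨n - (k + 1), by omega⟩
    rw [Finset.sum_Icc_succ_top (by omega)]
    have h1 : n - (k + 1) + 1 = m + 1 := by omega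
    have h2 : n - k = m + 1 := by omega
    have h3 : n - (k + 1) = m := by omega
    rw [h1, h3]
    rw [h2] at ih
    have ih' := ih hk'
    nlinarith [ih']

/-- Any subset of `Icc 1 n` of cardinality `k` has sum at most the sum of the top `k`. -/
lemma aux_upper (n k : ℕ) (T : Finset ℕ) (hT : T ⊆ Finset.Icc 1 n) (hc : T.card = k) :
    ∑ a ∈ T, a ≤ ∑ j ∈ Finset.Icc 1 k, (n - j + 1) := by
  have hkn : k ≤ n := by
    have := Finset.card_le_card hT
    simpa [hc] using this
  set C := Finset.Icc 1 n \ T with hC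
  have hsplit : ∑ a ∈ C, a + ∑ a ∈ T, a = ∑ a ∈ Finset.Icc 1 n, a :=
    Finset.sum_sdiff hT
  have hcc : C.card = n - k := by
    rw [hC, Finset.card_sdiff_of_subset hT, hc, Nat.card_Icc]; omega
  have hlow : C.card * (C.card + 1) ≤ 2 * ∑ a ∈ C, a :=
    aux_lower C (fun a ha => (Finset.mem_Icc.mp (Finset.mem_sdiff.mp ha).1).1)
  rw [hcc] at hlow
  have hg := aux_gauss n
  have hid := aux_ident n k hkn
  omega

/-- Let `n > x ≥ p ≥ 2` and `{S_1, ..., S_x}` be a partition of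
`I_n = {1, ..., n}` with `|S_i| = n_i`, `1 ≤ n_1 = ... = n_p ≤ n_{p+1} ≤ ... ≤ n_x`,
and set `Q_p = ∑_{j=1}^{p·n_1} (n - j + 1)` and `M = T_n / x` (as a rational number).
If `M > ⌊Q_p / p⌋` then `{S_1, ..., S_x}` is not a constant sum partition of `I_n`.
(`⌊Q_p / p⌋` is natural-number division of naturals, i.e. the floor.) -/
theorem stmt_5 (n x p : ℕ) (hp : 2 ≤ p) (hpx : p ≤ x) (hn : x < n)
    (nn : Fin x → ℕ) (hpos : ∀ i, 1 ≤ nn i) (hmono : Monotone nn)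
    (heq : ∀ i : Fin x, (i : ℕ) < p → nn i = nn ⟨0, by omega⟩)
    (S : Fin x → Finset ℕ)
    (hcard : ∀ i, (S i).card = nn i)
    (hdisj : ∀ i j, i ≠ j → Disjoint (S i) (S j))
    (hcover : Finset.univ.biUnion S = Finset.Icc 1 n)
    (hM : ((n * (n + 1) / 2 : ℕ) : ℚ) / (x : ℚ)
            > (((∑ j ∈ Finset.Icc 1 (p * nn ⟨0, by omega⟩), (n - j + 1)) / p : ℕ) : ℚ)) :
    ¬ ∃ M : ℕ, ∀ i, ∑ a ∈ S i, a = M := by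
  rintro ⟨M, hMs⟩
  set n1 := nn ⟨0, by omega⟩ with hn1
  set k := p * n1 with hk
  set Q := ∑ j ∈ Finset.Icc 1 k, (n - j + 1) with hQ
  -- total sum
  have hdisjP : ((Finset.univ : Finset (Fin x)) : Set (Fin x)).PairwiseDisjoint S := by
    intro i _ j _ hij
    exact hdisj i j hij
  have htot : ∑ i, ∑ a ∈ S i, a = ∑ a ∈ Finset.Icc 1 n, a := by
    rw [← hcover, Finset.sum_biUnion hdisjP]
  have hxM : x * M = ∑ a ∈ Finset.Icc 1 n, a := by
    rw [← htot]
    simp [hMs, Finset.sum_const, mul_comm]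
  -- the first p sets
  set F := Finset.univ.filter (fun i : Fin x => (i : ℕ) < p) with hF
  have hFcard : F.card = p := by
    have himg : F.image Fin.val = Finset.range p := by
      ext m
      simp only [hF, Finset.mem_image, Finset.mem_filter, Finset.mem_univ, true_and,
        Finset.mem_range]
      constructor
      · rintro ⟨i, hi, rfl⟩; exact hi
      · intro hm; exact ⟨⟨m, by omega⟩, hm, rfl⟩
    have := congrArg Finset.card himg
    rwa [Finset.card_image_of_injective _ Fin.val_injective, Finset.card_range] at this
  set U := F.biUnion S with hU
  have hUsub : U ⊆ Finset.Icc 1 n := by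
    rw [← hcover]
    intro a ha
    obtain ⟨i, _, hai⟩ := Finset.mem_biUnion.mp ha
    exact Finset.mem_biUnion.mpr ⟨i, Finset.mem_univ i, hai⟩
  have hdisjF : (F : Set (Fin x)).PairwiseDisjoint S := fun i _ j _ hij => hdisj i j hij
  have hUcard : U.card = k := by
    rw [hU, Finset.card_biUnion (fun i hi j hj hij => hdisj i j hij)]
    have : ∀ i ∈ F, (S i).card = n1 := by
      intro i hi
      rw [hcard i, heq i (by simpa [hF] using hi)]
    rw [Finset.sum_congr rfl this, Finset.sum_const, hFcard, smul_eq_mul]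
  have hUsum : ∑ a ∈ U, a = p * M := by
    rw [hU, Finset.sum_biUnion hdisjF]
    simp [hMs, Finset.sum_const, hFcard, mul_comm]
  have hQle : p * M ≤ Q := by
    rw [← hUsum]
    exact aux_upper n k U hUsub hUcard
  have hMle : M ≤ Q / p := Nat.le_div_iff_mul_le (show 0 < p by omega) |>.mpr (by rw [mul_comm]; exact hQle)
  -- rational side
  have hgauss := aux_gauss n
  have hhalf : n * (n + 1) / 2 = x * M := by omega
  rw [hhalf] at hM
  have hx0 : (x : ℚ) ≠ 0 := Nat.cast_ne_zero.mpr (by omega)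
  have hlhs : ((x * M : ℕ) : ℚ) / (x : ℚ) = (M : ℚ) := by
    push_cast
    field_simp
  rw [hlhs] at hM
  have : (Q / p : ℕ) < M := by exact_mod_cast hM
  omega
end
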